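/- Let 𝔡 be a finite-dimensional Lie algebra with invariant β ∈ S²𝔡, and form the semidirect product Lie algebra 𝔡̂ = 𝔡 ⋉ 𝔡*_β, where 𝔡 acts on 𝔡*_β by the coadjoint action. Then the symmetric bilinear form β̂ on 𝔡̂ defined by β̂((ξ₁, μ₁), (ξ₂, μ₂)) = β(μ₁, μ₂) + ⟨μ₁, ξ₂⟩ + ⟨μ₂, ξ₁⟩ is non-degenerate and ad-invariant, 𝔡 ⊕ 0 is a Lagrangian Lie subalgebra, and 0 ⊕ 𝔡*_β is a Lie algebra ideal. -/
import Mathlib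


open Module LieAlgebra

/-- Let `𝔡` be a finite-dimensional Lie algebra with invariant symmetric 2-tensor `β`
(sharp map `Bs`), and form the semidirect product `𝔡̂ = 𝔡 ⋉ 𝔡*_β` on `D × 𝔡*`,
with bracket `Br (ξ₁,μ₁) (ξ₂,μ₂) = (⁅ξ₁,ξ₂⁆, ad*_{ξ₁}μ₂ − ad*_{ξ₂}μ₁ + [μ₁,μ₂])`,
where `ad*_ξ μ = −μ ∘ ad ξ` and `[μ₁,μ₂] = br μ₁ μ₂` is the bracket of `𝔡*_β`.
Then `β̂((ξ₁,μ₁),(ξ₂,μ₂)) = β(μ₁,μ₂) + ⟨μ₁,ξ₂⟩ + ⟨μ₂,ξ₁⟩` is symmetric,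
non-degenerate and ad-invariant, `𝔡 ⊕ 0` is a Lagrangian Lie subalgebra, and
`0 ⊕ 𝔡*_β` is a Lie algebra ideal. -/
theorem semidirect_metrized {K D : Type*} [Field K]
    [LieRing D] [LieAlgebra K D] [FiniteDimensional K D]
    (Bs : Module.Dual K D →ₗ[K] D)
    (hsymm : ∀ μ ν : Module.Dual K D, μ (Bs ν) = ν (Bs μ))
    (hinv : ∀ (ξ : D) (μ : Module.Dual K D),
      Bs (μ ∘ₗ LieAlgebra.ad K D ξ) = -⁅ξ, Bs μ⁆)
    (br : Module.Dual K D → Module.Dual K D → Module.Dual K D)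
    (hbr : ∀ (μ₁ μ₂ : Module.Dual K D) (ξ : D), br μ₁ μ₂ ξ = μ₂ ⁅ξ, Bs μ₁⁆)
    (Br : (D × Module.Dual K D) → (D × Module.Dual K D) → (D × Module.Dual K D))
    (hBr : ∀ x y : D × Module.Dual K D,
      Br x y = (⁅x.1, y.1⁆,
        -(y.2 ∘ₗ LieAlgebra.ad K D x.1) + (x.2 ∘ₗ LieAlgebra.ad K D y.1)
          + br x.2 y.2))
    (hatβ : (D × Module.Dual K D) → (D × Module.Dual K D) → K)
    (hβ : ∀ x y : D × Module.Dual K D,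
      hatβ x y = x.2 (Bs y.2) + x.2 y.1 + y.2 x.1) :
    -- β̂ is symmetric
    (∀ x y, hatβ x y = hatβ y x) ∧
    -- β̂ is non-degenerate
    (∀ x, (∀ y, hatβ x y = 0) → x = 0) ∧
    -- β̂ is invariant
    (∀ x y z, hatβ (Br x y) z + hatβ y (Br x z) = 0) ∧
    -- 𝔡 ⊕ 0 is a Lagrangian Lie subalgebra
    (∀ x : D × Module.Dual K D,
      (∀ ξ : D, hatβ x (ξ, (0 : Module.Dual K D)) = 0) ↔ x.2 = 0) ∧
    (∀ ξ₁ ξ₂ : D,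
      Br (ξ₁, (0 : Module.Dual K D)) (ξ₂, (0 : Module.Dual K D))
        = (⁅ξ₁, ξ₂⁆, (0 : Module.Dual K D))) ∧
    -- 0 ⊕ 𝔡*_β is a Lie algebra ideal
    (∀ (x : D × Module.Dual K D) (μ : Module.Dual K D),
      (Br x ((0 : D), μ)).1 = 0 ∧ (Br ((0 : D), μ) x).1 = 0) := by

  -- helper: μ ⁅ξ, Bs ν⁆ = -ν ⁅ξ, Bs μ⁆
  have key : ∀ (ξ : D) (μ ν : Module.Dual K D), μ ⁅ξ, Bs ν⁆ = -ν ⁅ξ, Bs μ⁆ := by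
    intro ξ μ ν
    have h := congrArg μ (hinv ξ ν)
    simp only [map_neg] at h
    have h2 := hsymm μ (ν ∘ₗ LieAlgebra.ad K D ξ)
    rw [h2] at h
    simp only [LinearMap.comp_apply, LieAlgebra.ad_apply] at h
    linear_combination h
  refine ⟨?_, ?_, ?_, ?_, ?_, ?_⟩
  · intro x y
    rw [hβ, hβ, hsymm]
    ring
  · intro x hx
    have h2 : x.2 = 0 := by
      ext ξ
      have := hx (ξ, 0)
      rw [hβ] at this
      simpa using this
    have h1 : x.1 = 0 := by
      rw [← Module.forall_dual_apply_eq_zero_iff K]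
      intro μ
      have := hx (0, μ)
      rw [hβ, h2] at this
      simpa using this
    exact Prod.ext h1 h2
  · intro x y z
    obtain ⟨ξ₁, μ₁⟩ := x; obtain ⟨ξ₂, μ₂⟩ := y; obtain ⟨ξ₃, μ₃⟩ := z
    simp only [hβ, hBr, LinearMap.add_apply, LinearMap.neg_apply,
      LinearMap.comp_apply, LieAlgebra.ad_apply, map_add, map_neg, hbr, hinv]
    have e1 : μ₁ ⁅ξ₂, Bs μ₃⁆ = -μ₃ ⁅ξ₂, Bs μ₁⁆ := key _ _ _
    have e2 : μ₂ ⁅Bs μ₃, Bs μ₁⁆ = -μ₂ ⁅Bs μ₁, Bs μ₃⁆ := by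
      rw [show (⁅Bs μ₃, Bs μ₁⁆ : D) = -⁅Bs μ₁, Bs μ₃⁆ from (lie_skew _ _).symm,
        map_neg]
    have e3 : μ₁ ⁅ξ₃, ξ₂⁆ = -μ₁ ⁅ξ₂, ξ₃⁆ := by
      rw [show (⁅ξ₃, ξ₂⁆ : D) = -⁅ξ₂, ξ₃⁆ from (lie_skew _ _).symm, map_neg]
    have e4 : μ₂ (Bs (br μ₁ μ₃)) = μ₂ ⁅Bs μ₁, Bs μ₃⁆ := by
      have h5 : br μ₁ μ₃ = -(μ₃ ∘ₗ LieAlgebra.ad K D (Bs μ₁)) := by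
        ext ξ
        simp only [hbr, LinearMap.neg_apply, LinearMap.comp_apply,
          LieAlgebra.ad_apply, ← lie_skew (Bs μ₁) ξ, map_neg, neg_neg]
      rw [h5, map_neg, hinv, neg_neg]
    set_option maxHeartbeats 1000000 in
    linear_combination e1 + e2 + e3 + e4
  · intro x
    constructor
    · intro h
      ext ξ
      have := h ξ
      rw [hβ] at this
      simpa using this
    · intro h ξ
      rw [hβ, h]
      simp
  · intro ξ₁ ξ₂
    rw [hBr]
    refine Prod.ext rfl ?_
    have hbr0 : br (0 : Module.Dual K D) 0 = 0 := by
      ext ξ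
      simp [hbr]
    simp [hbr0]
  · intro x μ
    constructor <;> rw [hBr] <;> simp
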